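/- If an irrational number α has bounded partial quotients in its continued fraction expansion, then so does α/2. -/

import Mathlib

/-- The partial quotients of the simple continued fraction expansion of `α`:
`a 0 = ⌊α⌋` and the subsequent ones are obtained by iterating the Gauss map. -/
noncomputable def cfrac (α : ℝ) : ℕ → ℤ
  | 0 => ⌊α⌋
  | n + 1 => cfrac (Int.fract α)⁻¹ n

/-- `α` has bounded partial quotients. -/
def BddPartialQuotients (α : ℝ) : Prop := ∃ B : ℤ, ∀ i : ℕ, cfrac α i ≤ B


open GenContFract (of)
open GenContFract

lemma cfrac_succ' (v : ℝ) (n : ℕ) : cfrac v (n + 1) = cfrac (Int.fract v)⁻¹ n := rfl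

lemma Irrational.fract' {v : ℝ} (hv : Irrational v) : Irrational (Int.fract v) := by
  rw [Int.fract]; exact hv.sub_intCast _

lemma cfrac_stream : ∀ (n : ℕ) (v : ℝ), Irrational v →
    ∃ ifp : IntFractPair ℝ, IntFractPair.stream v n = some ifp ∧
      Irrational ifp.fr ∧ ifp.b = cfrac v n := by
  intro n
  induction n with
  | zero =>
    intro v hv
    exact ⟨IntFractPair.of v, IntFractPair.stream_zero v, hv.fract', rfl⟩
  | succ n ih =>
    intro v hv
    have hfr : Irrational (Int.fract v) := hv.fract'
    obtain ⟨ifp, h1, h2, h3⟩ := ih (Int.fract v)⁻¹ hfr.inv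
    exact ⟨ifp, by rw [IntFractPair.stream_succ hfr.ne_zero]; exact h1, h2,
      by rw [h3, cfrac_succ']⟩

/-- one is a lower bound for the partial quotients with positive index -/
lemma one_le_cfrac {v : ℝ} (hv : Irrational v) (n : ℕ) : 1 ≤ cfrac v (n + 1) := by
  obtain ⟨ifp, h1, _, h3⟩ := cfrac_stream (n + 1) v hv
  rw [← h3]
  exact IntFractPair.one_le_succ_nth_stream_b h1

lemma partDens_eq {v : ℝ} (hv : Irrational v) (n : ℕ) :
    (of v).partDens.get? n = some ((cfrac v (n + 1) : ℝ)) := by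
  obtain ⟨ifp, h1, _, h3⟩ := cfrac_stream (n + 1) v hv
  have := get?_of_eq_some_of_succ_get?_intFractPair_stream h1
  rw [partDens, Stream'.Seq.map_get?, this, h3]; rfl

lemma s_get_eq {v : ℝ} (hv : Irrational v) (n : ℕ) :
    (of v).s.get? n = some ⟨1, (cfrac v (n + 1) : ℝ)⟩ := by
  obtain ⟨ifp, h1, _, h3⟩ := cfrac_stream (n + 1) v hv
  have := get?_of_eq_some_of_succ_get?_intFractPair_stream h1
  rw [this, h3]

lemma not_term {v : ℝ} (hv : Irrational v) (n : ℕ) : ¬(of v).TerminatedAt n := by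
  rw [terminatedAt_iff_s_none, s_get_eq hv n]
  simp

/-- integer numerators of the convergents -/
noncomputable def cA (v : ℝ) : ℕ → ℤ
  | 0 => 1
  | 1 => ⌊v⌋
  | (n + 2) => cfrac v (n + 1) * cA v (n + 1) + cA v n

/-- integer denominators of the convergents -/
noncomputable def cD (v : ℝ) : ℕ → ℤ
  | 0 => 0
  | 1 => 1
  | (n + 2) => cfrac v (n + 1) * cD v (n + 1) + cD v n

lemma conts_eq {v : ℝ} (hv : Irrational v) :
    ∀ n, (of v).contsAux n = ⟨(cA v n : ℝ), (cD v n : ℝ)⟩ := by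
  intro n
  induction n using Nat.strong_induction_on with
  | _ n ih =>
    match n with
    | 0 => simp [cA, cD, zeroth_contAux_eq_one_zero]
    | 1 =>
      rw [first_contAux_eq_h_one, of_h_eq_floor]
      simp [cA, cD]
    | (n + 2) =>
      have h1 := ih (n + 1) (by omega)
      have h0 := ih n (by omega)
      have hrec := contsAux_recurrence (s_get_eq hv n) rfl rfl
      rw [hrec, h1, h0]
      simp only [nextConts, nextNum, nextDen, cA, cD]
      push_cast
      congr 1 <;> ring

lemma cD_pos {v : ℝ} (hv : Irrational v) : ∀ n, 0 ≤ cD v n ∧ 1 ≤ cD v (n + 1) := by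
  intro n
  induction n with
  | zero => simp [cD]
  | succ n ih =>
    refine ⟨by linarith [ih.2], ?_⟩
    show 1 ≤ cfrac v (n + 1) * cD v (n + 1) + cD v n
    nlinarith [one_le_cfrac hv n, ih.1, ih.2]

lemma cD_mono {v : ℝ} (hv : Irrational v) (n : ℕ) : cD v n ≤ cD v (n + 1) := by
  match n with
  | 0 => simp [cD]
  | (n + 1) =>
    show cD v (n + 1) ≤ cfrac v (n + 1) * cD v (n + 1) + cD v n
    nlinarith [one_le_cfrac hv n, (cD_pos hv n).1, (cD_pos hv n).2]

lemma cD_growth {v : ℝ} (hv : Irrational v) (n : ℕ) : cD v n + 1 ≤ cD v (n + 2) := by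
  show cD v n + 1 ≤ cfrac v (n + 1) * cD v (n + 1) + cD v n
  nlinarith [one_le_cfrac hv n, (cD_pos hv n).2]

lemma cD_unbounded {v : ℝ} (hv : Irrational v) (M : ℤ) : ∃ n, M < cD v (n + 2) := by
  have key : ∀ k : ℕ, (k : ℤ) ≤ cD v (2 * k) := by
    intro k
    induction k with
    | zero => simp [cD]
    | succ k ih =>
      have := cD_growth hv (2 * k)
      have h2 : 2 * (k + 1) = 2 * k + 2 := by ring
      rw [h2]
      push_cast
      omega
  obtain ⟨k, hk⟩ := exists_nat_gt (M : ℝ)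
  refine ⟨2 * k, ?_⟩
  have : (M : ℤ) < k := by exact_mod_cast hk
  have := key k
  have hg : cD v (2 * k) ≤ cD v (2 * k + 1) := cD_mono hv _
  have hg2 : cD v (2 * k + 1) ≤ cD v (2 * k + 2) := cD_mono hv _
  omega

/-- the determinant identity -/
lemma cdet {v : ℝ} (n : ℕ) :
    cA v n * cD v (n + 1) - cD v n * cA v (n + 1) = (-1) ^ n := by
  induction n with
  | zero => simp [cA, cD]
  | succ n ih =>
    show cA v (n+1) * (cfrac v (n + 1) * cD v (n + 1) + cD v n)
        - cD v (n+1) * (cfrac v (n + 1) * cA v (n + 1) + cA v n) = (-1) ^ (n+1)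
    have : cA v (n+1) * (cfrac v (n + 1) * cD v (n + 1) + cD v n)
        - cD v (n+1) * (cfrac v (n + 1) * cA v (n + 1) + cA v n)
        = -(cA v n * cD v (n + 1) - cD v n * cA v (n + 1)) := by ring
    rw [this, ih]
    ring

lemma convs_eq {v : ℝ} (hv : Irrational v) (n : ℕ) :
    (of v).convs n = (cA v (n + 1) : ℝ) / (cD v (n + 1) : ℝ) := by
  rw [conv_eq_conts_a_div_conts_b, nth_cont_eq_succ_nth_contAux, conts_eq hv]

lemma dens_eq {v : ℝ} (hv : Irrational v) (n : ℕ) :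
    (of v).dens n = (cD v (n + 1) : ℝ) := by
  rw [den_eq_conts_b, nth_cont_eq_succ_nth_contAux, conts_eq hv]

/-- upper bound: `|v - A/D| ≤ 1/(D_{n+1} D_{n+2})` -/
lemma conv_ub {v : ℝ} (hv : Irrational v) (n : ℕ) :
    |v - (cA v (n + 1) : ℝ) / (cD v (n + 1) : ℝ)|
      ≤ 1 / ((cD v (n + 1) : ℝ) * (cD v (n + 2) : ℝ)) := by
  have := abs_sub_convs_le (v := v) (n := n) (not_term hv n)
  rwa [convs_eq hv, dens_eq hv, dens_eq hv] at this

def Bad (x : ℝ) : Prop := ∃ c : ℝ, 0 < c ∧ ∀ p q : ℤ, 0 < q → c / (q : ℝ) ^ 2 ≤ |x - p / q|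
/-- lower bound: `|v - A/D| ≥ 1/(D_{n+1} D_{n+3})` -/
lemma conv_lb {v : ℝ} (hv : Irrational v) (n : ℕ) :
    1 / ((cD v (n + 1) : ℝ) * (cD v (n + 3) : ℝ))
      ≤ |v - (cA v (n + 1) : ℝ) / (cD v (n + 1) : ℝ)| := by
  have hD1p : (1 : ℝ) ≤ (cD v (n + 1) : ℝ) := by exact_mod_cast (cD_pos hv n).2
  have hD2p : (1 : ℝ) ≤ (cD v (n + 2) : ℝ) := by exact_mod_cast (cD_pos hv (n + 1)).2
  have hD3p : (1 : ℝ) ≤ (cD v (n + 3) : ℝ) := by exact_mod_cast (cD_pos hv (n + 2)).2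
  have hdet : (cA v (n + 1) : ℝ) * (cD v (n + 2) : ℝ)
      - (cD v (n + 1) : ℝ) * (cA v (n + 2) : ℝ) = (-1 : ℝ) ^ (n + 1) := by
    have h2 : cA v (n + 1) * cD v (n + 2) - cD v (n + 1) * cA v (n + 2) = (-1) ^ (n + 1) :=
      cdet (v := v) (n + 1)
    have h3 : ((cA v (n + 1) * cD v (n + 2) - cD v (n + 1) * cA v (n + 2) : ℤ) : ℝ)
        = (((-1 : ℤ) ^ (n + 1) : ℤ) : ℝ) := by rw [h2]
    push_cast at h3
    linarith
  have hd : |(cA v (n + 1) : ℝ) / (cD v (n + 1) : ℝ) - (cA v (n + 2) : ℝ) / (cD v (n + 2) : ℝ)|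
      = 1 / ((cD v (n + 1) : ℝ) * (cD v (n + 2) : ℝ)) := by
    have h0 : (cA v (n + 1) : ℝ) / (cD v (n + 1) : ℝ) - (cA v (n + 2) : ℝ) / (cD v (n + 2) : ℝ)
        = ((cA v (n + 1) : ℝ) * (cD v (n + 2) : ℝ)
            - (cD v (n + 1) : ℝ) * (cA v (n + 2) : ℝ))
          / ((cD v (n + 1) : ℝ) * (cD v (n + 2) : ℝ)) := by
      field_simp
    have habs : |(-1 : ℝ) ^ (n + 1)| = 1 := abs_neg_one_pow _
    have hp12 : (0:ℝ) < (cD v (n + 1) : ℝ) * (cD v (n + 2) : ℝ) := by nlinarith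
    rw [h0, hdet, abs_div, habs, abs_of_pos hp12]
  have he2 : |v - (cA v (n + 2) : ℝ) / (cD v (n + 2) : ℝ)|
      ≤ 1 / ((cD v (n + 2) : ℝ) * (cD v (n + 3) : ℝ)) := conv_ub hv (n + 1)
  have hgap : (cD v (n + 2) : ℝ) ≤ (cD v (n + 3) : ℝ) - (cD v (n + 1) : ℝ) := by
    have h1 : cD v (n + 1) + cD v (n + 2) ≤ cD v (n + 3) := by
      have h1 := one_le_cfrac hv (n + 1)
      have h2 := (cD_pos hv (n + 1)).2
      show _ ≤ cfrac v (n + 2) * cD v (n + 2) + cD v (n + 1)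
      nlinarith
    have h2 : ((cD v (n + 1) + cD v (n + 2) : ℤ) : ℝ) ≤ ((cD v (n + 3) : ℤ) : ℝ) := by
      exact_mod_cast h1
    push_cast at h2
    linarith
  have htri : |(cA v (n + 1) : ℝ) / (cD v (n + 1) : ℝ) - (cA v (n + 2) : ℝ) / (cD v (n + 2) : ℝ)|
      ≤ |v - (cA v (n + 1) : ℝ) / (cD v (n + 1) : ℝ)|
        + |v - (cA v (n + 2) : ℝ) / (cD v (n + 2) : ℝ)| := by
    have h0 : (cA v (n + 1) : ℝ) / (cD v (n + 1) : ℝ) - (cA v (n + 2) : ℝ) / (cD v (n + 2) : ℝ)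
        = -(v - (cA v (n + 1) : ℝ) / (cD v (n + 1) : ℝ))
          + (v - (cA v (n + 2) : ℝ) / (cD v (n + 2) : ℝ)) := by ring
    rw [h0]
    refine (abs_add_le _ _).trans ?_
    rw [abs_neg]
  have key : 1 / ((cD v (n + 1) : ℝ) * (cD v (n + 2) : ℝ))
      - 1 / ((cD v (n + 2) : ℝ) * (cD v (n + 3) : ℝ))
      ≤ |v - (cA v (n + 1) : ℝ) / (cD v (n + 1) : ℝ)| := by
    rw [hd] at htri
    linarith
  refine le_trans ?_ key
  have hp1 : (0:ℝ) < (cD v (n + 1) : ℝ) := lt_of_lt_of_le one_pos hD1p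
  have hp2 : (0:ℝ) < (cD v (n + 2) : ℝ) := lt_of_lt_of_le one_pos hD2p
  have hp3 : (0:ℝ) < (cD v (n + 3) : ℝ) := lt_of_lt_of_le one_pos hD3p
  have hpos : (0:ℝ) < (cD v (n + 1) : ℝ) * (cD v (n + 2) : ℝ) * (cD v (n + 3) : ℝ) :=
    mul_pos (mul_pos hp1 hp2) hp3
  rw [div_sub_div _ _ (by nlinarith : ((cD v (n + 1) : ℝ) * (cD v (n + 2) : ℝ)) ≠ 0)
    (by nlinarith : ((cD v (n + 2) : ℝ) * (cD v (n + 3) : ℝ)) ≠ 0)]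
  rw [div_le_div_iff₀ (by nlinarith) (by nlinarith)]
  nlinarith [mul_le_mul_of_nonneg_left hgap (le_of_lt hpos)]

lemma cD_step_le {v : ℝ} (hv : Irrational v) {K : ℤ} (hK : ∀ i, cfrac v i ≤ K) (n : ℕ) :
    cD v (n + 2) ≤ (K + 1) * cD v (n + 1) := by
  have h1 := hK (n + 1)
  have h2 := (cD_pos hv n).1
  have h3 := (cD_pos hv n).2
  have h4 := cD_mono hv n
  show cfrac v (n + 1) * cD v (n + 1) + cD v n ≤ _
  nlinarith

lemma bdd_to_bad {v : ℝ} (hv : Irrational v) (h : BddPartialQuotients v) : Bad v := by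
  obtain ⟨B, hB⟩ := h
  have hK1 : (1 : ℤ) ≤ max B 1 := le_max_right _ _
  set K : ℤ := max B 1 with hKdef
  have hK : ∀ i, cfrac v i ≤ K := fun i => (hB i).trans (le_max_left _ _)
  clear_value K
  have hKR : (1 : ℝ) ≤ (K : ℝ) := by exact_mod_cast hK1
  refine ⟨1 / (4 * ((K : ℝ) + 1) ^ 2), by positivity, ?_⟩
  intro p q hq
  have hQ1 : (1 : ℝ) ≤ (q : ℝ) := by exact_mod_cast hq
  have hQ0 : (0 : ℝ) < (q : ℝ) := by linarith
  classical
  have hex : ∃ n, 2 * q < cD v (n + 2) := cD_unbounded hv (2 * q)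
  obtain ⟨n, hbig, hsmall⟩ : ∃ n, 2 * q < cD v (n + 2) ∧ cD v (n + 1) ≤ 2 * q := by
    refine ⟨Nat.find hex, Nat.find_spec hex, ?_⟩
    rcases Nat.eq_zero_or_pos (Nat.find hex) with h0 | h0
    · rw [h0]
      show cD v 1 ≤ 2 * q
      have h1 : cD v 1 = 1 := rfl
      omega
    · obtain ⟨m, hm⟩ := Nat.exists_eq_succ_of_ne_zero (Nat.pos_iff_ne_zero.mp h0)
      have hmin := Nat.find_min hex (by omega : m < Nat.find hex)
      rw [hm]
      show cD v (m + 2) ≤ 2 * q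
      omega
  have hD1p : (1 : ℝ) ≤ (cD v (n + 1) : ℝ) := by exact_mod_cast (cD_pos hv n).2
  have hD2p : (1 : ℝ) ≤ (cD v (n + 2) : ℝ) := by exact_mod_cast (cD_pos hv (n + 1)).2
  have hD1le : (cD v (n + 1) : ℝ) ≤ 2 * (q : ℝ) := by exact_mod_cast hsmall
  have hD2ge : 2 * (q : ℝ) < (cD v (n + 2) : ℝ) := by exact_mod_cast hbig
  by_cases hpq : (p : ℝ) / q = (cA v (n + 1) : ℝ) / (cD v (n + 1) : ℝ)
  · -- the fraction equals the convergent
    rw [hpq]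
    have hlb := conv_lb hv n
    have hD3p : (1 : ℝ) ≤ (cD v (n + 3) : ℝ) := by exact_mod_cast (cD_pos hv (n + 2)).2
    have h1 : (cD v (n + 3) : ℝ) ≤ ((K : ℝ) + 1) * (cD v (n + 2) : ℝ) := by
      exact_mod_cast cD_step_le hv hK (n + 1)
    have h2 : (cD v (n + 2) : ℝ) ≤ ((K : ℝ) + 1) * (cD v (n + 1) : ℝ) := by
      exact_mod_cast cD_step_le hv hK n
    have hD3le : (cD v (n + 3) : ℝ) ≤ ((K : ℝ) + 1) ^ 2 * (cD v (n + 1) : ℝ) := by nlinarith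
    have h5 : (cD v (n + 3) : ℝ) ≤ ((K : ℝ) + 1) ^ 2 * (2 * q) := by nlinarith
    have h6 : (cD v (n + 1) : ℝ) * (cD v (n + 3) : ℝ)
        ≤ (2 * q) * (((K : ℝ) + 1) ^ 2 * (2 * q)) := by
      apply mul_le_mul hD1le h5 (by linarith) (by positivity)
    refine le_trans ?_ hlb
    rw [div_le_div_iff₀ (by positivity) (by nlinarith)]
    have h7 : 1 / (4 * ((K : ℝ) + 1) ^ 2) * ((cD v (n + 1) : ℝ) * (cD v (n + 3) : ℝ))
        ≤ 1 / (4 * ((K : ℝ) + 1) ^ 2) * (4 * ((K : ℝ) + 1) ^ 2 * (q : ℝ) ^ 2) := by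
      apply mul_le_mul_of_nonneg_left _ (by positivity)
      nlinarith
    have h8 : 1 / (4 * ((K : ℝ) + 1) ^ 2) * (4 * ((K : ℝ) + 1) ^ 2 * (q : ℝ) ^ 2)
        = (q : ℝ) ^ 2 := by
      field_simp
    linarith
  · -- the fraction is distinct from the convergent
    have hN0 : p * cD v (n + 1) - cA v (n + 1) * q ≠ 0 := by
      intro h0
      apply hpq
      have h1 : ((p * cD v (n + 1) : ℤ) : ℝ) = ((cA v (n + 1) * q : ℤ) : ℝ) := by
        exact_mod_cast congrArg (fun z : ℤ => (z : ℝ)) (by omega : p * cD v (n + 1) = cA v (n + 1) * q)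
      push_cast at h1
      field_simp
      linarith
    have hNabs : (1 : ℝ) ≤ |((p * cD v (n + 1) - cA v (n + 1) * q : ℤ) : ℝ)| := by
      rw [← Int.cast_abs]
      exact_mod_cast Int.one_le_abs hN0
    have hdist : 1 / ((q : ℝ) * (cD v (n + 1) : ℝ))
        ≤ |(p : ℝ) / q - (cA v (n + 1) : ℝ) / (cD v (n + 1) : ℝ)| := by
      have heq : (p : ℝ) / q - (cA v (n + 1) : ℝ) / (cD v (n + 1) : ℝ)
          = ((p * cD v (n + 1) - cA v (n + 1) * q : ℤ) : ℝ) / ((q : ℝ) * (cD v (n + 1) : ℝ)) := by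
        push_cast
        field_simp
      rw [heq, abs_div, abs_of_pos (by positivity : (0:ℝ) < (q : ℝ) * (cD v (n + 1) : ℝ))]
      exact div_le_div_of_nonneg_right hNabs (by positivity)
    have hub := conv_ub hv n
    have htri : |(p : ℝ) / q - (cA v (n + 1) : ℝ) / (cD v (n + 1) : ℝ)|
        ≤ |v - (p : ℝ) / q| + |v - (cA v (n + 1) : ℝ) / (cD v (n + 1) : ℝ)| := by
      have h0 : (p : ℝ) / q - (cA v (n + 1) : ℝ) / (cD v (n + 1) : ℝ)
          = -(v - (p : ℝ) / q) + (v - (cA v (n + 1) : ℝ) / (cD v (n + 1) : ℝ)) := by ring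
      rw [h0]
      refine (abs_add_le _ _).trans ?_
      rw [abs_neg]
    have hub2 : |v - (cA v (n + 1) : ℝ) / (cD v (n + 1) : ℝ)|
        ≤ 1 / ((cD v (n + 1) : ℝ) * (2 * q)) := by
      refine hub.trans ?_
      rw [div_le_div_iff₀ (by nlinarith) (by positivity)]
      nlinarith
    have hmain : 1 / (2 * (q : ℝ) * (cD v (n + 1) : ℝ)) ≤ |v - (p : ℝ) / q| := by
      have h1 : 1 / ((q : ℝ) * (cD v (n + 1) : ℝ))
          - 1 / ((cD v (n + 1) : ℝ) * (2 * q)) = 1 / (2 * (q : ℝ) * (cD v (n + 1) : ℝ)) := by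
        field_simp
        ring
      linarith
    refine le_trans ?_ hmain
    rw [div_le_div_iff₀ (by positivity) (by positivity)]
    have h1 : 2 * (q : ℝ) * (cD v (n + 1) : ℝ) ≤ 4 * (q : ℝ) ^ 2 := by nlinarith
    have h2 : 1 / (4 * ((K : ℝ) + 1) ^ 2) * (2 * (q : ℝ) * (cD v (n + 1) : ℝ))
        ≤ 1 / (4 * ((K : ℝ) + 1) ^ 2) * (4 * (q : ℝ) ^ 2) :=
      mul_le_mul_of_nonneg_left h1 (by positivity)
    have h3 : 1 / (4 * ((K : ℝ) + 1) ^ 2) ≤ 1 / 4 := by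
      apply one_div_le_one_div_of_le (by norm_num)
      nlinarith
    have h4 : 1 / (4 * ((K : ℝ) + 1) ^ 2) * (4 * (q : ℝ) ^ 2)
        ≤ 1 / 4 * (4 * (q : ℝ) ^ 2) :=
      mul_le_mul_of_nonneg_right h3 (by positivity)
    have h5 : (1 : ℝ) / 4 * (4 * (q : ℝ) ^ 2) = (q : ℝ) ^ 2 := by ring
    linarith

lemma bad_to_bdd {x : ℝ} (hx : Irrational x) (h : Bad x) : BddPartialQuotients x := by
  obtain ⟨c, hc, hbad⟩ := h
  refine ⟨max (cfrac x 0) ⌈1 / c⌉, fun i => ?_⟩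
  match i with
  | 0 => exact le_max_left _ _
  | (n + 1) =>
    refine le_trans ?_ (le_max_right _ _)
    have hb1 : (1 : ℤ) ≤ cfrac x (n + 1) := one_le_cfrac hx n
    have hub := abs_sub_convergents_le' (partDens_eq hx n)
    rw [convs_eq hx, dens_eq hx] at hub
    have hD1p : (1 : ℝ) ≤ (cD x (n + 1) : ℝ) := by exact_mod_cast (cD_pos hx n).2
    have hbp : (1 : ℝ) ≤ (cfrac x (n + 1) : ℝ) := by exact_mod_cast hb1
    have hqpos : (0 : ℤ) < cD x (n + 1) := (cD_pos hx n).2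
    have hlow := hbad (cA x (n + 1)) (cD x (n + 1)) hqpos
    have hchain : c / (cD x (n + 1) : ℝ) ^ 2
        ≤ 1 / ((cfrac x (n + 1) : ℝ) * (cD x (n + 1) : ℝ) * (cD x (n + 1) : ℝ)) :=
      le_trans hlow hub
    have hble : (cfrac x (n + 1) : ℝ) ≤ 1 / c := by
      rw [le_div_iff₀ hc]
      by_contra hlt
      push_neg at hlt
      have hD1sq : (0 : ℝ) < (cD x (n + 1) : ℝ) ^ 2 := by positivity
      rw [div_le_div_iff₀ (by positivity) (by positivity)] at hchain
      nlinarith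
    have h2 : (cfrac x (n + 1) : ℝ) ≤ (⌈1 / c⌉ : ℝ) := hble.trans (Int.le_ceil _)
    exact_mod_cast h2

lemma bad_div_two {x : ℝ} (h : Bad x) : Bad (x / 2) := by
  obtain ⟨c, hc, hbad⟩ := h
  refine ⟨c / 2, by positivity, fun p q hq => ?_⟩
  have h1 := hbad (2 * p) q hq
  have hQ0 : (0 : ℝ) < (q : ℝ) := by exact_mod_cast hq
  have heq : x / 2 - (p : ℝ) / q = (x - ((2 * p : ℤ) : ℝ) / q) / 2 := by
    push_cast
    ring
  rw [heq, abs_div, abs_of_pos (by norm_num : (0:ℝ) < 2)]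
  have : c / 2 / (q : ℝ) ^ 2 = c / (q : ℝ) ^ 2 / 2 := by ring
  rw [this]
  linarith

/-- If an irrational `α` has bounded partial quotients, then so does `α/2`. -/
theorem stmt18 (α : ℝ) (hirr : Irrational α) (h : BddPartialQuotients α) :
    BddPartialQuotients (α / 2) := by
  have h2 : Irrational (α / 2) := by
    have := hirr.div_intCast (m := 2) (by norm_num)
    simpa using this
  exact bad_to_bdd h2 (bad_div_two (bdd_to_bad hirr h))
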